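/- Let S^n = (S₁,…,Sₙ) be i.i.d. finite discrete random variables and Z^n = (Z₁,…,Zₙ) be any finite discrete random variables, and define U_i = (Z^{i−1}, S^{i−1}). Then H(Z^n | S^n) = ∑_{i=1}^{n} [H(Z_i | S_i, U_i) − I(U_i ; S_i)]. In particular ∑_{i=1}^{n} I(U_i ; S_i) ≤ ∑_{i=1}^{n} H(Z_i | S_i, U_i). -/
import Mathlib


open scoped BigOperators

/-- Shannon entropy (in bits) of a finitely supported probability mass function. -/
noncomputable def ent {α : Type*} [Fintype α] (p : α → ℝ) : ℝ :=
  -∑ a, p a * Real.logb 2 (p a)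

/-- Probability that the random variable `f` (under pmf `p` on `Ω`) takes the value `a`. -/
noncomputable def prOf {Ω α : Type*} [Fintype Ω] [DecidableEq α]
    (p : Ω → ℝ) (f : Ω → α) (a : α) : ℝ :=
  ∑ w ∈ Finset.univ.filter (fun w => f w = a), p w

/-- Entropy of the push-forward of `p` under `f`. -/
noncomputable def entOf {Ω α : Type*} [Fintype Ω] [Fintype α] [DecidableEq α]
    (p : Ω → ℝ) (f : Ω → α) : ℝ :=
  ent (fun a => prOf p f a)

/-- Mutual information `I(f;g)`. -/
noncomputable def miOf {Ω α β : Type*} [Fintype Ω] [Fintype α] [Fintype β]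
    [DecidableEq α] [DecidableEq β] (p : Ω → ℝ) (f : Ω → α) (g : Ω → β) : ℝ :=
  entOf p f + entOf p g - entOf p (fun w => (f w, g w))

/-- Conditional entropy `H(f | h)`. -/
noncomputable def condEntOf {Ω α γ : Type*} [Fintype Ω] [Fintype α] [Fintype γ]
    [DecidableEq α] [DecidableEq γ] (p : Ω → ℝ) (f : Ω → α) (h : Ω → γ) : ℝ :=
  entOf p (fun w => (f w, h w)) - entOf p h

/-- Conditional mutual information `I(f;g | h)`. -/
noncomputable def cmiOf {Ω α β γ : Type*} [Fintype Ω] [Fintype α] [Fintype β] [Fintype γ]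
    [DecidableEq α] [DecidableEq β] [DecidableEq γ]
    (p : Ω → ℝ) (f : Ω → α) (g : Ω → β) (h : Ω → γ) : ℝ :=
  entOf p (fun w => (f w, h w)) + entOf p (fun w => (g w, h w)) - entOf p h
    - entOf p (fun w => (f w, g w, h w))

/-- `p` is a probability mass function. -/
def IsPMF {Ω : Type*} [Fintype Ω] (p : Ω → ℝ) : Prop :=
  (∀ w, 0 ≤ p w) ∧ ∑ w, p w = 1

/-- `f` and `g` are conditionally independent given `h` under `p`. -/
def CondIndepOf {Ω α β γ : Type*} [Fintype Ω]
    [DecidableEq α] [DecidableEq β] [DecidableEq γ]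
    (p : Ω → ℝ) (f : Ω → α) (g : Ω → β) (h : Ω → γ) : Prop :=
  ∀ a b c, prOf p (fun w => (f w, g w, h w)) (a, b, c) * prOf p h c
    = prOf p (fun w => (f w, h w)) (a, c) * prOf p (fun w => (g w, h w)) (b, c)

/-- `f` and `g` are independent under `p`. -/
def IndepOf {Ω α β : Type*} [Fintype Ω] [DecidableEq α] [DecidableEq β]
    (p : Ω → ℝ) (f : Ω → α) (g : Ω → β) : Prop :=
  ∀ a b, prOf p (fun w => (f w, g w)) (a, b) = prOf p f a * prOf p g b

/-- The "past" random variable `U_i = (Z^{i-1}, S^{i-1})`, encoded by masking coordinates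
`≥ i` with `none`. -/
def Upast {Zt St : Type*} (n : ℕ) (i : Fin n) :
    ((Fin n → Zt) × (Fin n → St)) → ((Fin n → Option Zt) × (Fin n → Option St)) :=
  fun w => (fun j => if (j : ℕ) < (i : ℕ) then some (w.1 j) else none,
            fun j => if (j : ℕ) < (i : ℕ) then some (w.2 j) else none)

section Aux
variable {Ω α β γ : Type*} [Fintype Ω]

lemma prOf_nonneg [DecidableEq α] {p : Ω → ℝ} (hp : ∀ w, 0 ≤ p w) (f : Ω → α) (a : α) :
    0 ≤ prOf p f a :=
  Finset.sum_nonneg fun w _ => hp w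

lemma prOf_comp [Fintype α] [DecidableEq α] [DecidableEq β]
    (p : Ω → ℝ) (f : Ω → α) (g : α → β) (b : β) :
    prOf p (fun w => g (f w)) b = ∑ a ∈ Finset.univ.filter (fun a => g a = b), prOf p f a := by
  unfold prOf
  rw [Finset.sum_fiberwise_eq_sum_filter Finset.univ (Finset.univ.filter (fun a => g a = b)) f p]
  apply Finset.sum_congr _ (fun _ _ => rfl)
  ext w
  simp

lemma entOf_comp_inj [Fintype α] [Fintype β] [DecidableEq α] [DecidableEq β]
    (p : Ω → ℝ) (f : Ω → α) {e : α → β} (he : Function.Injective e) :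
    entOf p (fun w => e (f w)) = entOf p f := by
  unfold entOf ent
  congr 1
  have key : ∀ a, prOf p (fun w => e (f w)) (e a) = prOf p f a := by
    intro a; unfold prOf; apply Finset.sum_congr _ (fun _ _ => rfl); ext w; simp [he.eq_iff]
  have h1 : ∑ a : α, prOf p f a * Real.logb 2 (prOf p f a)
      = ∑ b ∈ Finset.univ.image e,
          prOf p (fun w => e (f w)) b * Real.logb 2 (prOf p (fun w => e (f w)) b) := by
    rw [Finset.sum_image (fun x _ y _ h => he h)]
    exact Finset.sum_congr rfl fun a _ => by rw [key a]
  rw [h1]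
  refine (Finset.sum_subset (Finset.subset_univ _) ?_).symm
  intro b _ hb
  have hz : prOf p (fun w => e (f w)) b = 0 := by
    unfold prOf
    apply Finset.sum_eq_zero
    intro w hw
    simp only [Finset.mem_filter] at hw
    exact absurd (hw.2 ▸ (Finset.mem_image_of_mem e (Finset.mem_univ (f w)))) hb
  simp [hz]

lemma entOf_congr [Fintype α] [Fintype β] [DecidableEq α] [DecidableEq β]
    (p : Ω → ℝ) (f : Ω → α) (g : Ω → β) (φ : α → β) (ψ : β → α)
    (hφ : ∀ w, g w = φ (f w)) (hψ : ∀ w, f w = ψ (g w)) :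
    entOf p f = entOf p g := by
  have h1 : entOf p (fun w => ((f w, g w) : α × β)) = entOf p f := by
    have : (fun w => ((f w, g w) : α × β)) = fun w => ((f w, φ (f w)) : α × β) := by
      funext w; rw [hφ w]
    rw [this]
    exact entOf_comp_inj p f (e := fun a => (a, φ a)) (fun x y h => congrArg Prod.fst h)
  have h2 : entOf p (fun w => ((f w, g w) : α × β)) = entOf p g := by
    have : (fun w => ((f w, g w) : α × β)) = fun w => ((ψ (g w), g w) : α × β) := by
      funext w; rw [← hψ w]
    rw [this]
    exact entOf_comp_inj p g (e := fun b => (ψ b, b)) (fun x y h => congrArg Prod.snd h)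
  rw [← h1, h2]

lemma entOf_const [Fintype α] [DecidableEq α] {p : Ω → ℝ} (hp1 : ∑ w, p w = 1) (c : α) :
    entOf p (fun _ => c) = 0 := by
  unfold entOf ent prOf
  rw [neg_eq_zero]
  apply Finset.sum_eq_zero
  intro a _
  by_cases h : a = c
  · subst h
    simp [hp1]
  · have : Finset.univ.filter (fun _ : Ω => c = a) = ∅ := by
      ext w; simp [Ne.symm h]
    simp [this]

end Aux

section Aux2
variable {Ω α γ : Type*} [Fintype Ω]

lemma prOf_marg [Fintype α] [Fintype γ] [DecidableEq α] [DecidableEq γ]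
    (p : Ω → ℝ) (f : Ω → α) (h : Ω → γ) (c : γ) :
    prOf p h c = ∑ a, prOf p (fun w => (f w, h w)) (a, c) := by
  have e1 : prOf p h c = prOf p (fun w => Prod.snd ((fun w => (f w, h w)) w)) c := rfl
  rw [e1, prOf_comp p (fun w => (f w, h w)) Prod.snd c, Finset.sum_filter,
    Fintype.sum_prod_type]
  simp

lemma entOf_le_entOf_pair [Fintype α] [Fintype γ] [DecidableEq α] [DecidableEq γ]
    {p : Ω → ℝ} (hp0 : ∀ w, 0 ≤ p w) (f : Ω → α) (h : Ω → γ) :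
    entOf p h ≤ entOf p (fun w => (f w, h w)) := by
  unfold entOf ent
  apply neg_le_neg
  set P : α × γ → ℝ := fun x => prOf p (fun w => (f w, h w)) x with hP
  set Q : γ → ℝ := fun c => prOf p h c with hQ
  have hPnn : ∀ x, 0 ≤ P x := fun x => prOf_nonneg hp0 _ x
  have hPQ : ∀ a c, P (a, c) ≤ Q c := by
    intro a c
    rw [hQ]
    show P (a,c) ≤ prOf p h c
    rw [prOf_marg p f h c]
    exact Finset.single_le_sum (fun a' _ => hPnn (a', c)) (Finset.mem_univ a)
  calc ∑ x : α × γ, P x * Real.logb 2 (P x)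
      = ∑ c, ∑ a, P (a, c) * Real.logb 2 (P (a, c)) := Fintype.sum_prod_type_right _
    _ ≤ ∑ c, ∑ a, P (a, c) * Real.logb 2 (Q c) := by
        apply Finset.sum_le_sum
        intro c _
        apply Finset.sum_le_sum
        intro a _
        rcases eq_or_lt_of_le (hPnn (a, c)) with h0 | hpos
        · rw [← h0]; simp
        · exact mul_le_mul_of_nonneg_left
            (Real.logb_le_logb_of_le one_lt_two hpos (hPQ a c)) (le_of_lt hpos)
    _ = ∑ c, Q c * Real.logb 2 (Q c) := by
        refine Finset.sum_congr rfl fun c _ => ?_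
        rw [← Finset.sum_mul]
        congr 1
        exact (prOf_marg p f h c).symm

lemma sum_prod_filter_eq {ι St : Type*} [Fintype ι] [DecidableEq ι] [Fintype St]
    [DecidableEq St] (q : St → ℝ) (hq1 : ∑ s, q s = 1) (i : ι) (s : St) :
    ∑ sv ∈ Finset.univ.filter (fun sv : ι → St => sv i = s), ∏ j, q (sv j) = q s := by
  classical
  rw [Finset.sum_filter]
  have hterm : ∀ sv : ι → St, (if sv i = s then ∏ j, q (sv j) else 0)
      = ∏ j, (if j = i then (if sv j = s then q (sv j) else 0) else q (sv j)) := by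
    intro sv
    by_cases h : sv i = s
    · rw [if_pos h]
      refine Finset.prod_congr rfl fun j _ => ?_
      by_cases hj : j = i
      · subst hj; simp [h]
      · simp [hj]
    · rw [if_neg h]
      symm
      apply Finset.prod_eq_zero (Finset.mem_univ i)
      simp [h]
  rw [Finset.sum_congr rfl (fun sv _ => hterm sv)]
  have := (Finset.prod_univ_sum (fun _ : ι => (Finset.univ : Finset St))
    (fun j s' => if j = i then (if s' = s then q s' else 0) else q s')).symm
  rw [Fintype.piFinset_univ] at this
  rw [this]
  rw [Finset.prod_eq_single i (fun j _ hj => by simp [hj, hq1]) (fun h => absurd (Finset.mem_univ i) h)]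
  simp

lemma sum_prod_weight {ι St : Type*} [Fintype ι] [DecidableEq ι] [Fintype St]
    (q : St → ℝ) (hq1 : ∑ s, q s = 1) (i : ι) (L : St → ℝ) :
    ∑ sv : ι → St, (∏ j, q (sv j)) * L (sv i) = ∑ s, q s * L s := by
  classical
  have hterm : ∀ sv : ι → St, (∏ j, q (sv j)) * L (sv i)
      = ∏ j, (if j = i then q (sv j) * L (sv j) else q (sv j)) := by
    intro sv
    have h1 : (∏ j, q (sv j)) = q (sv i) * ∏ j ∈ Finset.univ.erase i, q (sv j) :=
      (Finset.mul_prod_erase Finset.univ _ (Finset.mem_univ i)).symm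
    have h2 : ∏ j, (if j = i then q (sv j) * L (sv j) else q (sv j))
        = (q (sv i) * L (sv i)) * ∏ j ∈ Finset.univ.erase i, q (sv j) := by
      rw [← Finset.mul_prod_erase Finset.univ
        (fun j => if j = i then q (sv j) * L (sv j) else q (sv j)) (Finset.mem_univ i)]
      rw [if_pos rfl]
      congr 1
      exact Finset.prod_congr rfl fun j hj => if_neg (Finset.ne_of_mem_erase hj)
    rw [h1, h2]
    ring
  rw [Finset.sum_congr rfl (fun sv _ => hterm sv)]
  have key := (Finset.prod_univ_sum (fun _ : ι => (Finset.univ : Finset St))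
    (fun j s' => if j = i then q s' * L s' else q s')).symm
  rw [Fintype.piFinset_univ] at key
  rw [key]
  rw [Finset.prod_eq_single i (fun j _ hj => by simp [hj, hq1])
    (fun h => absurd (Finset.mem_univ i) h)]
  simp

end Aux2


def Vmask {Zt St : Type*} (n : ℕ) (k : ℕ) :
    ((Fin n → Zt) × (Fin n → St)) → ((Fin n → Option Zt) × (Fin n → Option St)) :=
  fun w => (fun j => if (j : ℕ) < k then some (w.1 j) else none,
            fun j => if (j : ℕ) < k then some (w.2 j) else none)

lemma Upast_eq_Vmask {Zt St : Type*} (n : ℕ) (i : Fin n) :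
    (Upast n i : ((Fin n → Zt) × (Fin n → St)) → _) = Vmask n (i : ℕ) := rfl

/-- For `S^n` i.i.d. and `U_i = (Z^{i-1}, S^{i-1})`:
`H(Z^n|S^n) = ∑ᵢ [H(Zᵢ|Sᵢ,Uᵢ) − I(Uᵢ;Sᵢ)]`, and in particular
`∑ᵢ I(Uᵢ;Sᵢ) ≤ ∑ᵢ H(Zᵢ|Sᵢ,Uᵢ)`. -/
theorem stmt_4 {Zt St : Type*} [Fintype Zt] [Fintype St] [DecidableEq Zt] [DecidableEq St]
    (n : ℕ) (p : (Fin n → Zt) × (Fin n → St) → ℝ) (hp : IsPMF p)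
    (q : St → ℝ) (hq : IsPMF q)
    (hiid : ∀ sv : Fin n → St, prOf p Prod.snd sv = ∏ i, q (sv i)) :
    condEntOf p Prod.fst Prod.snd
        = ∑ i : Fin n,
            (condEntOf p (fun w => w.1 i) (fun w => (w.2 i, Upast n i w))
              - miOf p (Upast n i) (fun w => w.2 i))
    ∧ ∑ i : Fin n, miOf p (Upast n i) (fun w => w.2 i)
        ≤ ∑ i : Fin n, condEntOf p (fun w => w.1 i) (fun w => (w.2 i, Upast n i w)) := by
  classical
  obtain ⟨hp0, hp1⟩ := hp
  obtain ⟨hq0, hq1⟩ := hq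
  -- marginal of each S_i is q
  have hSi : ∀ i : Fin n, entOf p (fun w => w.2 i) = -∑ s, q s * Real.logb 2 (q s) := by
    intro i
    unfold entOf ent
    congr 1
    refine Finset.sum_congr rfl fun s _ => ?_
    have hmarg : prOf p (fun w => w.2 i) s = q s := by
      have e0 : (fun w : (Fin n → Zt) × (Fin n → St) => w.2 i)
          = fun w => (fun sv => sv i) (Prod.snd w) := rfl
      rw [e0, prOf_comp p Prod.snd (fun sv => sv i) s]
      rw [Finset.sum_congr rfl (fun sv _ => hiid sv)]
      exact sum_prod_filter_eq q hq1 i s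
    simp only [hmarg]
  -- entropy of S^n is the sum of the entropies of the S_i
  have hsnd : entOf p Prod.snd = ∑ i : Fin n, entOf p (fun w => w.2 i) := by
    have e1 : entOf p Prod.snd
        = -∑ sv : Fin n → St, (∏ j, q (sv j)) * Real.logb 2 (∏ j, q (sv j)) := by
      unfold entOf ent
      congr 1
      refine Finset.sum_congr rfl fun sv _ => ?_
      simp only [hiid]
    have e2 : ∀ sv : Fin n → St, (∏ j, q (sv j)) * Real.logb 2 (∏ j, q (sv j))
        = ∑ i : Fin n, (∏ j, q (sv j)) * Real.logb 2 (q (sv i)) := by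
      intro sv
      by_cases h0 : ∀ j, q (sv j) ≠ 0
      · rw [Real.logb_prod _ _ (fun j _ => h0 j), Finset.mul_sum]
      · push_neg at h0
        obtain ⟨j0, hj0⟩ := h0
        have hz : (∏ j, q (sv j)) = 0 := Finset.prod_eq_zero (Finset.mem_univ j0) hj0
        simp [hz]
    rw [e1, Finset.sum_congr rfl (fun sv _ => e2 sv), Finset.sum_comm]
    rw [← Finset.sum_neg_distrib]
    refine Finset.sum_congr rfl fun i _ => ?_
    rw [sum_prod_weight q hq1 i (fun s => Real.logb 2 (q s)), hSi i]
  -- main identity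
  have key : condEntOf p Prod.fst Prod.snd
      = ∑ i : Fin n,
          (condEntOf p (fun w => w.1 i) (fun w => (w.2 i, Upast n i w))
            - miOf p (Upast n i) (fun w => w.2 i)) := by
    rcases Nat.eq_zero_or_pos n with hn | hn
    · subst hn
      rw [Finset.univ_eq_empty, Finset.sum_empty]
      unfold condEntOf
      haveI hZ : Unique (Fin 0 → Zt) := Pi.uniqueOfIsEmpty _
      haveI hS : Unique (Fin 0 → St) := Pi.uniqueOfIsEmpty _
      have e1 : (fun w : (Fin 0 → Zt) × (Fin 0 → St) => (Prod.fst w, Prod.snd w))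
          = fun _ => ((default, default) : (Fin 0 → Zt) × (Fin 0 → St)) := by
        funext w; exact Subsingleton.elim _ _
      have e2 : (Prod.snd : (Fin 0 → Zt) × (Fin 0 → St) → (Fin 0 → St))
          = fun _ => (default : Fin 0 → St) := by
        funext w; exact Subsingleton.elim _ _
      rw [e1, e2, entOf_const hp1, entOf_const hp1, sub_zero]
    · have hZne : Nonempty Zt := by
        by_contra h
        rw [not_nonempty_iff] at h
        haveI : IsEmpty ((Fin n → Zt) × (Fin n → St)) :=
          ⟨fun w => h.elim (w.1 ⟨0, hn⟩)⟩
        rw [Finset.univ_eq_empty, Finset.sum_empty] at hp1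
        exact one_ne_zero hp1.symm
      have hSne : Nonempty St := by
        by_contra h
        rw [not_nonempty_iff] at h
        haveI : IsEmpty ((Fin n → Zt) × (Fin n → St)) :=
          ⟨fun w => h.elim (w.2 ⟨0, hn⟩)⟩
        rw [Finset.univ_eq_empty, Finset.sum_empty] at hp1
        exact one_ne_zero hp1.symm
      obtain ⟨z0⟩ := hZne
      obtain ⟨s0⟩ := hSne
      set F : ℕ → ℝ := fun k => entOf p (Vmask n k) with hF
      -- each summand telescopes
      have hsummand : ∀ i : Fin n,
          condEntOf p (fun w => w.1 i) (fun w => (w.2 i, Upast n i w))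
            - miOf p (Upast n i) (fun w => w.2 i)
          = F ((i : ℕ) + 1) - F (i : ℕ) - entOf p (fun w => w.2 i) := by
        intro i
        have hA : entOf p (fun w => (w.1 i, w.2 i, Upast n i w))
            = F ((i : ℕ) + 1) := by
          refine entOf_congr p _ (Vmask n ((i : ℕ) + 1))
            (fun x => (fun j => if j = i then some x.1 else x.2.2.1 j,
                       fun j => if j = i then some x.2.1 else x.2.2.2 j))
            (fun u => ((u.1 i).getD z0, (u.2 i).getD s0,
              (fun j => if (j : ℕ) < (i : ℕ) then u.1 j else none,
               fun j => if (j : ℕ) < (i : ℕ) then u.2 j else none)))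
            ?_ ?_
          · intro w
            unfold Vmask Upast
            refine Prod.ext ?_ ?_ <;> · funext j
                                        by_cases hj : j = i
                                        · subst hj; simp
                                        · have hj' : (j : ℕ) ≠ (i : ℕ) :=
                                            fun hh => hj (Fin.ext hh)
                                          by_cases h2 : (j : ℕ) < (i : ℕ)
                                          · have h3 : (j : ℕ) < (i : ℕ) + 1 := by omega
                                            simp [hj, h2, h3]
                                          · have h3 : ¬ (j : ℕ) < (i : ℕ) + 1 := by omega
                                            simp [hj, h2, h3]
          · intro w
            unfold Vmask Upast
            refine Prod.ext ?_ (Prod.ext ?_ ?_)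
            · simp
            · simp
            · refine Prod.ext ?_ ?_ <;> · funext j
                                          by_cases h2 : (j : ℕ) < (i : ℕ)
                                          · have h3 : (j : ℕ) < (i : ℕ) + 1 := by omega
                                            simp [h2, h3]
                                          · simp [h2]
        have hB : entOf p (fun w => (w.2 i, Upast n i w))
            = entOf p (fun w => (Upast n i w, w.2 i)) :=
          entOf_congr p _ _ Prod.swap Prod.swap (fun w => rfl) (fun w => rfl)
        have hC : entOf p (Upast n i) = F (i : ℕ) := by
          rw [Upast_eq_Vmask]
        simp only [condEntOf, miOf]
        rw [hB, hC]
        have hA' : entOf p (fun w => ((w.1 i, (w.2 i, Upast n i w)) : Zt × St ×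
            ((Fin n → Option Zt) × (Fin n → Option St)))) = F ((i : ℕ) + 1) := hA
        rw [hA']
        ring
      rw [Finset.sum_congr rfl (fun i _ => hsummand i)]
      have htel : ∑ i : Fin n, (F ((i : ℕ) + 1) - F (i : ℕ)) = F n - F 0 := by
        rw [Fin.sum_univ_eq_sum_range (fun k => F (k + 1) - F k) n]
        exact Finset.sum_range_sub F n
      have hF0 : F 0 = 0 := by
        have e0 : (Vmask n 0 : (Fin n → Zt) × (Fin n → St) → _)
            = fun _ => ((fun _ => none, fun _ => none) :
                (Fin n → Option Zt) × (Fin n → Option St)) := by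
          funext w
          unfold Vmask
          simp
        rw [hF]
        simp only [e0]
        exact entOf_const hp1 _
      have hFn : F n = entOf p (fun w => (Prod.fst w, Prod.snd w)) := by
        rw [hF]
        refine (entOf_congr p _ (Vmask n n)
          (fun x => (fun j => some (x.1 j), fun j => some (x.2 j)))
          (fun u => (fun j => (u.1 j).getD z0, fun j => (u.2 j).getD s0))
          ?_ ?_).symm
        · intro w
          unfold Vmask
          refine Prod.ext ?_ ?_ <;> · funext j
                                      simp [j.isLt]
        · intro w
          unfold Vmask
          refine Prod.ext ?_ ?_ <;> · funext j
                                      simp [j.isLt]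
      rw [Finset.sum_sub_distrib, htel, hF0, hFn, sub_zero, ← hsnd]
      unfold condEntOf
      ring
  refine ⟨key, ?_⟩
  have hnn : 0 ≤ condEntOf p Prod.fst Prod.snd := by
    unfold condEntOf
    have := entOf_le_entOf_pair hp0 Prod.fst Prod.snd
    linarith
  rw [key] at hnn
  rw [Finset.sum_sub_distrib] at hnn
  linarith
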